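/- Let z ∈ (0,1) and define g(t) = √(t(1−t))·z/t for t ∈ [z,1]. Then for t ∈ (z, min(2z,1)) one has g(z) − g(t) ≥ (t−z)/(4√(2z)), and for t ∈ [min(2z,1), 1] one has g(z) − g(t) ≥ √(z(1−z))/4. -/

import Mathlib

set_option maxHeartbeats 1000000 in
/-- Lemma on the function `g(t) = √(t(1-t)) · z / t` for `z ∈ (0,1)`:
for `t ∈ (z, min(2z,1))`, `g z - g t ≥ (t-z)/(4√(2z))`, and
for `t ∈ [min(2z,1), 1]`, `g z - g t ≥ √(z(1-z))/4`. -/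
theorem stmt_0 (z : ℝ) (hz : 0 < z) (hz1 : z < 1)
    (g : ℝ → ℝ) (hg : ∀ t, g t = Real.sqrt (t * (1 - t)) * z / t) :
    (∀ t, z < t → t < min (2 * z) 1 →
      (t - z) / (4 * Real.sqrt (2 * z)) ≤ g z - g t) ∧
    (∀ t, min (2 * z) 1 ≤ t → t ≤ 1 →
      Real.sqrt (z * (1 - z)) / 4 ≤ g z - g t) := by
  have hz0 : (0:ℝ) < z * (1 - z) := by nlinarith
  have hgz : g z = Real.sqrt (z * (1 - z)) := by
    rw [hg]; field_simp
  set A := Real.sqrt (z * (1 - z)) with hAdef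
  have hA0 : 0 < A := Real.sqrt_pos.2 hz0
  have hA2 : A ^ 2 = z * (1 - z) := Real.sq_sqrt hz0.le
  constructor
  · intro t hzt htm
    have ht1 : t < 1 := lt_of_lt_of_le htm (min_le_right _ _)
    have ht2z : t < 2 * z := lt_of_lt_of_le htm (min_le_left _ _)
    have ht0 : 0 < t := hz.trans hzt
    set B := g t with hBdef
    have hB0 : 0 ≤ B := by
      rw [hBdef, hg]; positivity
    have hB2 : B ^ 2 * t = z ^ 2 * (1 - t) := by
      rw [hBdef, hg, div_pow, mul_pow, Real.sq_sqrt (by nlinarith)]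
      field_simp
    set w := Real.sqrt (2 * z) with hwdef
    have hw0 : 0 < w := Real.sqrt_pos.2 (by linarith)
    have hw2 : w ^ 2 = 2 * z := Real.sq_sqrt (by linarith)
    have hAw : A ≤ w := by
      have : A ^ 2 ≤ w ^ 2 := by nlinarith
      nlinarith
    have hBA : B ≤ A := by
      have : B ^ 2 < A ^ 2 := by nlinarith
      nlinarith
    have hkey : (A - B) * (A + B) * t = z * (t - z) := by nlinarith
    have hkey4 : (A - B) * (A + B) * t * w = z * (t - z) * w := by
      linear_combination w * hkey
    rw [hgz, div_le_iff₀ (by positivity)]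
    have hS : 0 < t * (A + B) := by positivity
    nlinarith [hkey4, hS,
      mul_nonneg (mul_nonneg (sub_nonneg.2 hzt.le) (sub_nonneg.2 ht2z.le)) (by positivity : (0:ℝ) ≤ A + B),
      mul_nonneg (mul_nonneg (sub_nonneg.2 hzt.le) (sub_nonneg.2 hBA)) (by linarith : (0:ℝ) ≤ 2 * z),
      mul_nonneg (mul_nonneg (sub_nonneg.2 hAw) (sub_nonneg.2 hzt.le)) (by linarith : (0:ℝ) ≤ 4 * z)]
  · intro t hmt ht1
    rcases le_or_gt 1 (2 * z) with h | h
    · have ht : t = 1 := le_antisymm ht1 (by simpa [min_eq_right h] using hmt)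
      subst ht
      have hg1 : g 1 = 0 := by rw [hg]; norm_num
      rw [hgz, hg1]
      linarith
    · have h2z : 2 * z ≤ t := by rwa [min_eq_left h.le] at hmt
      have ht0 : 0 < t := lt_of_lt_of_le (by linarith) h2z
      set B := g t with hBdef
      have hB0 : 0 ≤ B := by
        rw [hBdef, hg]; positivity
      have hB2 : B ^ 2 * t = z ^ 2 * (1 - t) := by
        rw [hBdef, hg, div_pow, mul_pow, Real.sq_sqrt (by nlinarith)]
        field_simp
      have h16 : 16 * z ^ 2 * (1 - t) ≤ 9 * (z * (1 - z)) * t := by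
        nlinarith [mul_nonneg hz.le (sub_nonneg.2 h2z), mul_nonneg (mul_nonneg hz.le hz.le) ht0.le]
      have hclaim : 16 * B ^ 2 ≤ 9 * A ^ 2 := by
        have h9 : 9 * A ^ 2 * t = 9 * (z * (1 - z)) * t := by rw [hA2]
        nlinarith [hB2, h16, ht0]
      rw [hgz]
      nlinarith [hclaim, hA0, sq_nonneg (3 * A - 4 * B)]
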